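/- Let W be a group, χ an automorphism of W with χ ∘ χ = id, and M, K normal subgroups of W of finite index. If [M : M ∩ χ(M)] does not divide [W : K], then M ∩ K ≠ χ(M) ∩ χ(K). -/

import Mathlib

/-- Chirality criterion: if `[M : M ∩ χ(M)]` does not divide `[W : K]`, then
`M ∩ K ≠ χ(M) ∩ χ(K)`, i.e. the mix is chiral. -/
theorem stmt_6 {W : Type*} [Group W] (χ : W ≃* W) (hχ : ∀ w, χ (χ w) = w)
    (M K : Subgroup W) [M.Normal] [K.Normal] [M.FiniteIndex] [K.FiniteIndex]
    (h : ¬ (M.map χ.toMonoidHom).relIndex M ∣ K.index) :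
    M ⊓ K ≠ M.map χ.toMonoidHom ⊓ K.map χ.toMonoidHom := by
  intro heq
  apply h
  have hle : M ⊓ K ≤ M.map χ.toMonoidHom := heq ▸ inf_le_left
  calc (M.map χ.toMonoidHom).relIndex M
      ∣ (M ⊓ K).relIndex M := Subgroup.relIndex_dvd_of_le_left M hle
    _ = K.relIndex M := by rw [inf_comm, Subgroup.inf_relIndex_right]
    _ ∣ K.index := Subgroup.relIndex_dvd_index_of_normal K M
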